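/- Let G be a simple graph and let e, f, g be edges of G. If some cycle of G contains both e and f, and some cycle of G contains both f and g, then some cycle of G contains both e and g. -/

import Mathlib

namespace StmtAux

open SimpleGraph Walk

variable {V : Type*} {G : SimpleGraph V}

lemma loop_path_nil {u : V} (r : G.Walk u u) (hr : r.IsPath) : r = Walk.nil := by
  cases r with
  | nil => rfl
  | cons h q =>
    rw [Walk.cons_isPath_iff] at hr
    exact (hr.2 q.end_mem_support).elim

lemma start_not_tail {u v : V} {p : G.Walk u v} (hp : p.IsPath) : u ∉ p.support.tail := by
  have h := (Walk.isPath_def p).mp hp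
  rw [Walk.support_eq_cons] at h
  exact (List.nodup_cons.mp h).1

lemma isPath_append {u v w : V} {p : G.Walk u v} {q : G.Walk v w} (hp : p.IsPath) (hq : q.IsPath)
    (hd : ∀ x ∈ p.support, x ∈ q.support → x = v) : (p.append q).IsPath := by
  rw [Walk.isPath_def, Walk.support_append, List.nodup_append]
  refine ⟨(Walk.isPath_def p).mp hp, ((Walk.isPath_def q).mp hq).sublist (List.tail_sublist _), ?_⟩
  intro x hx y hx' hxy; subst hxy
  have hxv : x = v := hd x hx (by rw [Walk.support_eq_cons]; exact List.mem_cons_of_mem _ hx')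
  exact start_not_tail hq (hxv ▸ hx')

lemma isCycle_append {u v : V} (hne : u ≠ v) {p : G.Walk u v} {q : G.Walk v u}
    (hp : p.IsPath) (hq : q.IsPath)
    (hsup : ∀ x ∈ p.support, x ∈ q.support → x = u ∨ x = v)
    (hedge : ∀ h ∈ p.edges, h ∉ q.edges) : (p.append q).IsCycle := by
  rw [Walk.isCycle_def]
  refine ⟨?_, ?_, ?_⟩
  · rw [Walk.isTrail_def, Walk.edges_append, List.nodup_append]
    exact ⟨hp.isTrail.edges_nodup, hq.isTrail.edges_nodup, fun a ha b hb hab => hedge a ha (hab ▸ hb)⟩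
  · intro hnil
    have hlen := congrArg Walk.length hnil
    rw [Walk.length_append, Walk.length_nil] at hlen
    have hp0 : p.length = 0 := by omega
    exact hne (Walk.eq_of_length_eq_zero hp0)
  · rw [Walk.tail_support_append, List.nodup_append]
    refine ⟨((Walk.isPath_def p).mp hp).sublist (List.tail_sublist _),
      ((Walk.isPath_def q).mp hq).sublist (List.tail_sublist _), ?_⟩
    intro x hx y hx' hxy; subst hxy
    have h1 : x ∈ p.support := by rw [Walk.support_eq_cons]; exact List.mem_cons_of_mem _ hx
    have h2 : x ∈ q.support := by rw [Walk.support_eq_cons]; exact List.mem_cons_of_mem _ hx'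
    rcases hsup x h1 h2 with rfl | rfl
    · exact start_not_tail hp hx
    · exact start_not_tail hq hx'

lemma exists_prefix {u v : V} (p : G.Walk u v) (S : V → Prop)
    (h : ∃ w ∈ p.support, S w) :
    ∃ (x : V) (p1 : G.Walk u x) (p2 : G.Walk x v),
      p = p1.append p2 ∧ S x ∧ ∀ w ∈ p1.support, S w → w = x := by
  induction p with
  | nil =>
    rename_i a
    refine ⟨a, Walk.nil, Walk.nil, rfl, ?_, ?_⟩
    · obtain ⟨w, hw, hSw⟩ := h
      rw [Walk.support_nil, List.mem_singleton] at hw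
      exact hw ▸ hSw
    · intro w hw _
      rw [Walk.support_nil, List.mem_singleton] at hw
      exact hw
  | @cons a b c h' p' ih =>
    by_cases hu : S a
    · refine ⟨a, Walk.nil, Walk.cons h' p', rfl, hu, ?_⟩
      intro w hw _
      rw [Walk.support_nil, List.mem_singleton] at hw
      exact hw
    · have h2 : ∃ w ∈ p'.support, S w := by
        obtain ⟨w, hw, hSw⟩ := h
        rw [Walk.support_cons, List.mem_cons] at hw
        rcases hw with rfl | hw
        · exact (hu hSw).elim
        · exact ⟨w, hw, hSw⟩
      obtain ⟨x, p1, p2, heq, hx, hcond⟩ := ih h2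
      refine ⟨x, Walk.cons h' p1, p2, by rw [Walk.cons_append, ← heq], hx, ?_⟩
      intro w hw hSw
      rw [Walk.support_cons, List.mem_cons] at hw
      rcases hw with rfl | hw
      · exact (hu hSw).elim
      · exact hcond w hw hSw

lemma first_edge {a v b : V} {r : G.Walk a v} (hr : r.IsPath) (he : s(a, b) ∈ r.edges) :
    ∃ (b' : V) (h2 : G.Adj a b') (r' : G.Walk b' v), r = Walk.cons h2 r' ∧ s(a, b') = s(a, b) := by
  cases r with
  | nil => simp at he
  | cons h' r'' =>
    rw [Walk.edges_cons, List.mem_cons] at he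
    rcases he with he | he
    · exact ⟨_, h', r'', rfl, he.symm⟩
    · rw [Walk.cons_isPath_iff] at hr
      exact ((hr.2 (r''.fst_mem_support_of_mem_edges he)).elim)

lemma mem_rotate [DecidableEq V] {v u y : V} {c : G.Walk v v} (h : u ∈ c.support) :
    y ∈ (c.rotate u h).support ↔ y ∈ c.support := by
  rw [Walk.rotate, Walk.mem_support_append_iff]
  conv_rhs => rw [← Walk.take_spec c h]
  rw [Walk.mem_support_append_iff]
  exact or_comm

lemma no_common_edge {u v w1 t : V} {r : G.Walk u v} {c : G.Walk w1 w1}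
    (hcond : ∀ w ∈ r.support, w ∈ c.support → w = t) :
    ∀ h' ∈ r.edges, h' ∉ c.edges := by
  intro h' h1 h2
  induction h' using Sym2.ind with
  | _ z1 z2 =>
    have hz1 : z1 = t := hcond _ (r.fst_mem_support_of_mem_edges h1) (c.fst_mem_support_of_mem_edges h2)
    have hz2 : z2 = t := hcond _ (r.snd_mem_support_of_mem_edges h1) (c.snd_mem_support_of_mem_edges h2)
    have hadj : G.Adj z1 z2 := (SimpleGraph.mem_edgeSet G).mp (r.edges_subset_edgeSet h1)
    exact hadj.ne (hz1.trans hz2.symm)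

lemma cycle_decomp [DecidableEq V] {v a b : V} {c : G.Walk v v} (hc : c.IsCycle)
    (he : s(a, b) ∈ c.edges) :
    ∃ (b' : V) (hab : G.Adj a b') (p : G.Walk b' a), s(a, b') = s(a, b) ∧ p.IsPath ∧
      s(a, b') ∉ p.edges ∧ (∀ h, h ∈ c.edges ↔ h = s(a, b') ∨ h ∈ p.edges) := by
  have ha : a ∈ c.support := c.fst_mem_support_of_mem_edges he
  have hc' : (c.rotate a ha).IsCycle := hc.rotate ha
  have hmem : ∀ h', h' ∈ (c.rotate a ha).edges ↔ h' ∈ c.edges :=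
    fun h' => (Walk.rotate_edges c a ha).mem_iff
  have he' : s(a, b) ∈ (c.rotate a ha).edges := (hmem _).mpr he
  obtain ⟨w, hadj, q, hcase⟩ : ∃ (w : V) (hadj : G.Adj a w) (q : G.Walk w a),
      c.rotate a ha = Walk.cons hadj q := by
    rcases hrot : c.rotate a ha with _ | ⟨hadj, q⟩
    · rw [hrot] at hc'; exact (Walk.IsCycle.not_of_nil hc').elim
    · exact ⟨_, hadj, q, rfl⟩
  · rw [hcase] at hc' he'
    rw [Walk.cons_isCycle_iff] at hc'
    obtain ⟨hqpath, hqe⟩ := hc'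
    have hmem' : ∀ h', h' ∈ c.edges ↔ h' = s(a, w) ∨ h' ∈ q.edges := by
      intro h'
      rw [← hmem h', hcase, Walk.edges_cons, List.mem_cons]
    by_cases hfirst : s(a, b) = s(a, w)
    · refine ⟨w, hadj, q, hfirst.symm, hqpath, ?_, ?_⟩
      · rw [← hfirst]; rw [hfirst]; exact hqe
      · intro h'; rw [hmem' h']
    · have he'' : s(a, b) ∈ q.edges := by
        rw [Walk.edges_cons, List.mem_cons] at he'
        tauto
      have hqrev : q.reverse.IsPath := hqpath.reverse
      have herev : s(a, b) ∈ q.reverse.edges := by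
        rw [Walk.edges_reverse, List.mem_reverse]; exact he''
      obtain ⟨b', h2, r', hre, hbb⟩ := first_edge hqrev herev
      have hq2 : q = (Walk.cons h2 r').reverse := by rw [← hre, Walk.reverse_reverse]
      have hr' : r'.IsPath ∧ a ∉ r'.support := by
        rw [hre, Walk.cons_isPath_iff] at hqrev; exact ⟨hqrev.1, hqrev.2⟩
      have hnotr' : s(a, b') ∉ r'.edges := by
        have ht : (Walk.cons h2 r').IsTrail := by
          rw [← hre]; exact hqrev.isTrail
        rw [Walk.isTrail_def, Walk.edges_cons, List.nodup_cons] at ht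
        exact ht.1
      refine ⟨b', h2, r'.append (Walk.cons hadj.symm Walk.nil), hbb, ?_, ?_, ?_⟩
      · refine isPath_append hr'.1 ?_ ?_
        · rw [Walk.cons_isPath_iff]
          refine ⟨Walk.IsPath.nil, ?_⟩
          rw [Walk.support_nil, List.mem_singleton]
          exact fun hwa => hadj.ne' hwa
        · intro x hx hx2
          rw [Walk.support_cons, Walk.support_nil, List.mem_cons, List.mem_singleton] at hx2
          rcases hx2 with h1 | h1
          · exact h1
          · exact ((hr'.2 (h1 ▸ hx)).elim)
      · rw [Walk.edges_append, List.mem_append]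
        rintro (hmem2 | hmem2)
        · exact hnotr' hmem2
        · rw [Walk.edges_cons, Walk.edges_nil, List.mem_singleton] at hmem2
          refine hfirst ?_
          calc s(a, b) = s(a, b') := hbb.symm
            _ = s(w, a) := hmem2
            _ = s(a, w) := Sym2.eq_swap
      · intro h'
        rw [hmem' h', Walk.edges_append, List.mem_append, Walk.edges_cons, Walk.edges_nil]
        have hqmem : h' ∈ q.edges ↔ h' = s(a, b') ∨ h' ∈ r'.edges := by
          rw [hq2, Walk.edges_reverse, List.mem_reverse, Walk.edges_cons, List.mem_cons]
        rw [hqmem, List.mem_singleton, Sym2.eq_swap (a := w)]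
        tauto

lemma cycle_split [DecidableEq V] {w2 x y : V} {c : G.Walk w2 w2} (hc : c.IsCycle)
    (hx : x ∈ c.support) (hy : y ∈ c.support) (hxy : x ≠ y) :
    ∃ (A1 : G.Walk x y) (A2 : G.Walk y x), A1.IsPath ∧ A2.IsPath ∧
      (∀ w ∈ A1.support, w ∈ A2.support → w = x ∨ w = y) ∧
      (∀ h ∈ c.edges, h ∈ A1.edges ∨ h ∈ A2.edges) ∧
      (∀ h ∈ A1.edges, h ∈ c.edges) ∧ (∀ h ∈ A2.edges, h ∈ c.edges) ∧
      (∀ w ∈ A1.support, w ∈ c.support) ∧ (∀ w ∈ A2.support, w ∈ c.support) := by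
  have hc' : (c.rotate x hx).IsCycle := hc.rotate hx
  have hy' : y ∈ (c.rotate x hx).support := (mem_rotate hx).mpr hy
  set c' := c.rotate x hx with hc'def
  set A1 := c'.takeUntil y hy' with hA1def
  set A2 := c'.dropUntil y hy' with hA2def
  have hspec : A1.append A2 = c' := Walk.take_spec c' hy'
  have hmemE : ∀ h', h' ∈ c'.edges ↔ h' ∈ c.edges := fun h' => (Walk.rotate_edges c x hx).mem_iff
  have hmemS : ∀ w, w ∈ c'.support ↔ w ∈ c.support := fun w => mem_rotate hx
  have hsupp_eq : c'.support = A1.support ++ A2.support.tail := by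
    rw [← hspec, Walk.support_append]
  have hedge_eq : ∀ h', h' ∈ c'.edges ↔ h' ∈ A1.edges ∨ h' ∈ A2.edges := by
    intro h'
    rw [← hspec, Walk.edges_append, List.mem_append]
  have htail : c'.support.tail = A1.support.tail ++ A2.support.tail := by
    rw [hsupp_eq, Walk.support_eq_cons A1, List.cons_append, List.tail_cons]
    simp
  have hnodup := hc'.2
  rw [htail, List.nodup_append] at hnodup
  obtain ⟨n1, n2, disj⟩ := hnodup
  replace disj : A1.support.tail.Disjoint A2.support.tail := fun z h1 h2 => disj z h1 z h2 rfl
  have hxA2 : x ∈ A2.support.tail := Walk.end_mem_tail_support_of_ne hxy.symm A2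
  have hyA1 : y ∈ A1.support.tail := Walk.end_mem_tail_support_of_ne hxy A1
  have hA1path : A1.IsPath := by
    rw [Walk.isPath_def, Walk.support_eq_cons, List.nodup_cons]
    exact ⟨fun hmem => disj hmem hxA2, n1⟩
  have hA2path : A2.IsPath := by
    rw [Walk.isPath_def, Walk.support_eq_cons, List.nodup_cons]
    exact ⟨fun hmem => disj hyA1 hmem, n2⟩
  refine ⟨A1, A2, hA1path, hA2path, ?_, ?_, ?_, ?_, ?_, ?_⟩
  · intro w hw1 hw2
    rw [Walk.support_eq_cons, List.mem_cons] at hw1 hw2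
    rcases hw1 with rfl | hw1
    · exact Or.inl rfl
    · rcases hw2 with rfl | hw2
      · exact Or.inr rfl
      · exact (disj hw1 hw2).elim
  · intro h hh
    exact (hedge_eq h).mp ((hmemE h).mpr hh)
  · intro h hh
    exact (hmemE h).mp ((hedge_eq h).mpr (Or.inl hh))
  · intro h hh
    exact (hmemE h).mp ((hedge_eq h).mpr (Or.inr hh))
  · intro w hw
    refine (hmemS w).mp ?_
    rw [hsupp_eq]
    exact List.mem_append_left _ hw
  · intro w hw
    rw [Walk.support_eq_cons, List.mem_cons] at hw
    rcases hw with rfl | hw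
    · exact hy
    · refine (hmemS w).mp ?_
      rw [hsupp_eq]
      exact List.mem_append_right _ hw

end StmtAux

open SimpleGraph Walk

/-- Let `e`, `f`, `g` be edges of a simple graph `G`.  If some cycle
of `G` contains both `e` and `f`, and some cycle of `G` contains both `f` and `g`, then
some cycle of `G` contains both `e` and `g`. -/
theorem stmt_13 {V : Type*} (G : SimpleGraph V) (e f g : Sym2 V)
    (he : e ∈ G.edgeSet) (hf : f ∈ G.edgeSet) (hg : g ∈ G.edgeSet)
    (h1 : ∃ (w : V) (c : G.Walk w w), c.IsCycle ∧ e ∈ c.edges ∧ f ∈ c.edges)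
    (h2 : ∃ (w : V) (c : G.Walk w w), c.IsCycle ∧ f ∈ c.edges ∧ g ∈ c.edges) :
    ∃ (w : V) (c : G.Walk w w), c.IsCycle ∧ e ∈ c.edges ∧ g ∈ c.edges := by
  classical
  obtain ⟨w1, c1, hc1, he1, hf1⟩ := h1
  obtain ⟨w2, c2, hc2, hf2, hg2⟩ := h2
  induction e using Sym2.ind with
  | _ a b =>
  induction f using Sym2.ind with
  | _ f1 f2 =>
  have hfadj : G.Adj f1 f2 := (SimpleGraph.mem_edgeSet G).mp hf
  by_cases he2 : s(a, b) ∈ c2.edges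
  · exact ⟨w2, c2, hc2, he2, hg2⟩
  obtain ⟨b', hab', p, hE, hppath, hpe, hiff⟩ := StmtAux.cycle_decomp hc1 he1
  have hfp : s(f1, f2) ∈ p.edges := by
    rcases (hiff _).mp hf1 with h | h
    · rw [h, hE] at hf2
      exact (he2 hf2).elim
    · exact h
  have hf1S : f1 ∈ c2.support := c2.fst_mem_support_of_mem_edges hf2
  have hf2S : f2 ∈ c2.support := c2.snd_mem_support_of_mem_edges hf2
  obtain ⟨x, p1, p2, hsplit, hxS, hp1⟩ := StmtAux.exists_prefix p (fun w => w ∈ c2.support)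
    ⟨f1, p.fst_mem_support_of_mem_edges hfp, hf1S⟩
  have hp1path : p1.IsPath := Walk.IsPath.of_append_left (hsplit ▸ hppath)
  have hp2path : p2.IsPath := Walk.IsPath.of_append_right (hsplit ▸ hppath)
  have hfp2 : s(f1, f2) ∈ p2.edges := by
    have hm := hfp
    rw [hsplit, Walk.edges_append, List.mem_append] at hm
    rcases hm with h | h
    · have hh1 : f1 = x := hp1 f1 (p1.fst_mem_support_of_mem_edges h) hf1S
      have hh2 : f2 = x := hp1 f2 (p1.snd_mem_support_of_mem_edges h) hf2S
      exact (hfadj.ne (hh1.trans hh2.symm)).elim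
    · exact h
  obtain ⟨y, q1, q2, hsplit2, hyS, hq1⟩ := StmtAux.exists_prefix p2.reverse
    (fun w => w ∈ c2.support)
    ⟨f1, by rw [Walk.support_reverse, List.mem_reverse]; exact p2.fst_mem_support_of_mem_edges hfp2,
      hf1S⟩
  have hq1path : q1.IsPath := Walk.IsPath.of_append_left (hsplit2 ▸ hp2path.reverse)
  have hq2path : q2.IsPath := Walk.IsPath.of_append_right (hsplit2 ▸ hp2path.reverse)
  have hfq2 : s(f1, f2) ∈ q2.edges := by
    have hrev : s(f1, f2) ∈ p2.reverse.edges := by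
      rw [Walk.edges_reverse, List.mem_reverse]; exact hfp2
    rw [hsplit2, Walk.edges_append, List.mem_append] at hrev
    rcases hrev with h | h
    · have hh1 : f1 = y := hq1 f1 (q1.fst_mem_support_of_mem_edges h) hf1S
      have hh2 : f2 = y := hq1 f2 (q1.snd_mem_support_of_mem_edges h) hf2S
      exact (hfadj.ne (hh1.trans hh2.symm)).elim
    · exact h
  have hxa : x ≠ a := by
    rintro rfl
    have hnil : p2 = Walk.nil := StmtAux.loop_path_nil p2 hp2path
    rw [hnil] at hfp2
    simp at hfp2
  have hyx : y ≠ x := by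
    rintro rfl
    have hnil : q2 = Walk.nil := StmtAux.loop_path_nil q2 hq2path
    rw [hnil] at hfq2
    simp at hfq2
  have hdisj : p1.support.Disjoint p2.support.tail := by
    have hn := hppath
    rw [hsplit, Walk.isPath_def, Walk.support_append, List.nodup_append] at hn
    exact fun z h1 h2 => hn.2.2 z h1 z h2 rfl
  have hanotp1 : a ∉ p1.support := fun h => hdisj h (Walk.end_mem_tail_support_of_ne hxa p2)
  have hRpath : (Walk.cons hab' p1).IsPath := hp1path.cons hanotp1
  have hq1p2 : ∀ w ∈ q1.support, w ∈ p2.support := by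
    intro w hw
    have hm : w ∈ (q1.append q2).support := Walk.subset_support_append_left _ _ hw
    rw [← hsplit2, Walk.support_reverse, List.mem_reverse] at hm
    exact hm
  have hint : ∀ w ∈ q1.support, w ∈ (Walk.cons hab' p1).support → w = a := by
    intro w hw hwR
    rw [Walk.support_cons, List.mem_cons] at hwR
    rcases hwR with rfl | hwp1
    · rfl
    · have hwp2 := hq1p2 w hw
      have hwx : w = x := by
        rw [Walk.support_eq_cons p2, List.mem_cons] at hwp2
        rcases hwp2 with rfl | htl
        · rfl
        · exact (hdisj hwp1 htl).elim
      subst hwx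
      exact ((hyx (hq1 w hw hxS).symm).elim)
  have hQpath : (q1.reverse.append (Walk.cons hab' p1)).IsPath := by
    refine StmtAux.isPath_append hq1path.reverse hRpath ?_
    intro z hz hzR
    rw [Walk.support_reverse, List.mem_reverse] at hz
    exact hint z hz hzR
  have heQ : s(a, b') ∈ (q1.reverse.append (Walk.cons hab' p1)).edges := by
    rw [Walk.edges_append, List.mem_append]
    right
    rw [Walk.edges_cons]
    exact List.mem_cons_self
  have hQS : ∀ w ∈ (q1.reverse.append (Walk.cons hab' p1)).support,
      w ∈ c2.support → w = x ∨ w = y := by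
    intro w hw hwS
    rw [Walk.mem_support_append_iff] at hw
    rcases hw with hw | hw
    · rw [Walk.support_reverse, List.mem_reverse] at hw
      exact Or.inr (hq1 w hw hwS)
    · rw [Walk.support_cons, List.mem_cons] at hw
      rcases hw with rfl | hw
      · exact Or.inr (hq1 w q1.start_mem_support hwS)
      · exact Or.inl (hp1 w hw hwS)
  have hQE : ∀ h' ∈ (q1.reverse.append (Walk.cons hab' p1)).edges, h' ∉ c2.edges := by
    intro h' hh hc2e
    rw [Walk.edges_append, List.mem_append] at hh
    rcases hh with hh | hh
    · rw [Walk.edges_reverse, List.mem_reverse] at hh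
      exact StmtAux.no_common_edge hq1 h' hh hc2e
    · rw [Walk.edges_cons, List.mem_cons] at hh
      rcases hh with rfl | hh
      · rw [hE] at hc2e
        exact he2 hc2e
      · exact StmtAux.no_common_edge hp1 h' hh hc2e
  obtain ⟨A1, A2, hA1p, hA2p, hA12, hsplitE, hA1sub, hA2sub, hA1S, hA2S⟩ :=
    StmtAux.cycle_split hc2 hxS hyS (fun h => hyx h.symm)
  rcases hsplitE g hg2 with hgA | hgA
  · refine ⟨y, (q1.reverse.append (Walk.cons hab' p1)).append A1, ?_, ?_, ?_⟩
    · refine StmtAux.isCycle_append hyx hQpath hA1p ?_ ?_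
      · intro z hz hz2
        exact (hQS z hz (hA1S z hz2)).symm
      · intro h' hh hh2
        exact hQE h' hh (hA1sub h' hh2)
    · rw [Walk.edges_append, List.mem_append]
      exact Or.inl (hE ▸ heQ)
    · rw [Walk.edges_append, List.mem_append]
      exact Or.inr hgA
  · refine ⟨y, A2.append (q1.reverse.append (Walk.cons hab' p1)).reverse, ?_, ?_, ?_⟩
    · refine StmtAux.isCycle_append hyx hA2p hQpath.reverse ?_ ?_
      · intro z hz hz2
        rw [Walk.support_reverse, List.mem_reverse] at hz2
        exact (hQS z hz2 (hA2S z hz)).symm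
      · intro h' hh hh2
        rw [Walk.edges_reverse, List.mem_reverse] at hh2
        exact hQE h' hh2 (hA2sub h' hh)
    · rw [Walk.edges_append, List.mem_append]
      right
      rw [Walk.edges_reverse, List.mem_reverse]
      exact hE ▸ heQ
    · rw [Walk.edges_append, List.mem_append]
      exact Or.inl hgA
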